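/- Let τ be a spanning tree of the complete graph K_n, let γ be the unique path in τ from vertex 1 to vertex 2, let i ∉ γ be a vertex with {1,i} an edge of τ. Then the graph obtained from τ by deleting the edge {1,i} and adding the edge {2,i} is again a spanning tree of K_n, and moreover {2,i} was not an edge of τ. -/

import Mathlib

open scoped Classical

open SimpleGraph

/-- if `τ` is a spanning tree of `Kₙ`, `γ` the unique path in
`τ` from vertex `1` to vertex `2` (here `0` and `1 : Fin n`), and `i ∉ γ` a
vertex with `{1, i}` an edge of `τ`, then `{2, i}` is not an edge of `τ` and
removing `{1, i}` and adding `{2, i}` yields again a spanning tree. -/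
theorem tree_edge_swap (n : ℕ) (hn : 2 ≤ n)
    (τ : SimpleGraph (Fin n)) (hτ : τ.IsTree) (i : Fin n)
    (hadj : τ.Adj ⟨0, by omega⟩ i)
    (hnotpath : ∀ p : τ.Walk ⟨0, by omega⟩ ⟨1, by omega⟩,
      p.IsPath → i ∉ p.support) :
    ¬ τ.Adj ⟨1, by omega⟩ i ∧
      (SimpleGraph.fromEdgeSet
          ((τ.edgeSet \ {s(⟨0, by omega⟩, i)}) ∪
            {s((⟨1, by omega⟩ : Fin n), i)})).IsTree := by
  set v0 : Fin n := ⟨0, by omega⟩ with hv0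
  set v1 : Fin n := ⟨1, by omega⟩ with hv1
  have hne01 : v0 ≠ v1 := by
    intro h
    have := congrArg Fin.val h
    simp [hv0, hv1] at this
  have hv0i : v0 ≠ i := hadj.ne
  -- the path γ from v0 to v1
  obtain ⟨w⟩ := hτ.isConnected.preconnected v0 v1
  set γ : τ.Walk v0 v1 := (w.toPath : τ.Path v0 v1).val with hγdef
  have hγp : γ.IsPath := (w.toPath : τ.Path v0 v1).2
  have hiγ : i ∉ γ.support := hnotpath γ hγp
  have hi1 : i ≠ v1 := fun h => hiγ (h ▸ γ.end_mem_support)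
  -- γ does not use the edge s(v0, i)
  have hγe : ∀ e ∈ γ.edges, e ∈ τ.edgeSet ∧ e ≠ s(v0, i) := by
    intro e he
    refine ⟨γ.edges_subset_edgeSet he, ?_⟩
    rintro rfl
    exact hiγ (γ.snd_mem_support_of_mem_edges he)
  -- Part 1
  have part1 : ¬ τ.Adj v1 i := by
    intro h
    have hpath : (SimpleGraph.Walk.cons hadj
        (SimpleGraph.Walk.cons h.symm SimpleGraph.Walk.nil)).IsPath := by
      simp [SimpleGraph.Walk.isPath_def, hv0i, hne01, hi1]
    exact hnotpath _ hpath (by simp)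
  refine ⟨part1, ?_⟩
  set S : Set (Sym2 (Fin n)) :=
    (τ.edgeSet \ {s(v0, i)}) ∪ {s(v1, i)} with hS
  set τ' : SimpleGraph (Fin n) := SimpleGraph.fromEdgeSet S with hτ'
  have hi1' : v1 ≠ i := Ne.symm hi1
  -- adjacency in τ'
  have hadj' : ∀ a b : Fin n, τ'.Adj a b ↔
      (τ.Adj a b ∧ s(a, b) ≠ s(v0, i)) ∨ s(a, b) = s(v1, i) := by
    intro a b
    rw [hτ', SimpleGraph.fromEdgeSet_adj]
    constructor
    · rintro ⟨(⟨h1, h2⟩ | h1), hne⟩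
      · exact Or.inl ⟨h1, h2⟩
      · exact Or.inr h1
    · rintro (⟨h1, h2⟩ | h1)
      · exact ⟨Or.inl ⟨h1, h2⟩, h1.ne⟩
      · refine ⟨Or.inr h1, ?_⟩
        rw [Sym2.eq_iff] at h1
        rcases h1 with ⟨rfl, rfl⟩ | ⟨rfl, rfl⟩
        · exact hi1'
        · exact hi1
  have hadj1i' : τ'.Adj v1 i := (hadj' v1 i).mpr (Or.inr rfl)
  -- γ lives in τ'
  have hγ' : τ'.Reachable v0 v1 := by
    refine ⟨γ.transfer τ' ?_⟩
    intro e he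
    obtain ⟨h1, h2⟩ := hγe e he
    rw [hτ', SimpleGraph.edgeSet_fromEdgeSet]
    exact ⟨Or.inl ⟨h1, h2⟩, τ.not_isDiag_of_mem_edgeSet h1⟩
  have hr0i' : τ'.Reachable v0 i := hγ'.trans hadj1i'.reachable
  -- connectivity of τ'
  have htrans : ∀ a b : Fin n, τ.Reachable a b → τ'.Reachable a b := by
    intro a b hr
    obtain ⟨p⟩ := hr
    induction p with
    | nil => exact SimpleGraph.Reachable.refl _
    | @cons a c b hac p ih =>
      refine SimpleGraph.Reachable.trans ?_ ih
      by_cases hcase : s(a, c) = s(v0, i)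
      · rw [Sym2.eq_iff] at hcase
        rcases hcase with ⟨rfl, rfl⟩ | ⟨rfl, rfl⟩
        · exact hr0i'
        · exact hr0i'.symm
      · exact ((hadj' a c).mpr (Or.inl ⟨hac, hcase⟩)).reachable
  have hconn' : τ'.Connected := by
    rw [SimpleGraph.connected_iff]
    exact ⟨fun a b => htrans a b (hτ.isConnected.preconnected a b), ⟨v0⟩⟩
  -- e₀ := s(v0, i) is a bridge of τ
  have hbr : τ.IsBridge s(v0, i) :=
    (SimpleGraph.isAcyclic_iff_forall_adj_isBridge.mp hτ.IsAcyclic) hadj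
  have hnr : ¬ (τ \ SimpleGraph.fromEdgeSet {s(v0, i)}).Reachable v0 i :=
    (SimpleGraph.isBridge_iff.mp hbr)
  -- γ lives in τ \ e₀
  have hγ0 : (τ \ SimpleGraph.fromEdgeSet {s(v0, i)}).Reachable v0 v1 := by
    refine ⟨γ.transfer _ ?_⟩
    intro e he
    obtain ⟨h1, h2⟩ := hγe e he
    rw [SimpleGraph.edgeSet_sdiff, SimpleGraph.edgeSet_fromEdgeSet]
    exact ⟨h1, fun hm => h2 hm.1⟩
  -- e₁ := s(v1, i) is a bridge of τ'
  have hbr' : τ'.IsBridge s(v1, i) := by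
    rw [SimpleGraph.isBridge_iff]
    intro hr
    have hle : (τ' \ SimpleGraph.fromEdgeSet {s(v1, i)}) ≤
        (τ \ SimpleGraph.fromEdgeSet {s(v0, i)}) := by
      intro a b hab
      rw [SimpleGraph.sdiff_adj, SimpleGraph.fromEdgeSet_adj] at hab ⊢
      obtain ⟨hab1, hab2⟩ := hab
      rcases (hadj' a b).mp hab1 with ⟨h1, h2⟩ | h1
      · exact ⟨h1, fun hm => h2 hm.1⟩
      · exact absurd ⟨h1, hab1.2⟩ hab2
    exact hnr (hγ0.trans (hr.mono hle))
  have hforall := ((SimpleGraph.isBridge_iff_forall_cycle_notMem hadj1i').mp hbr')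
  have hacyc : τ'.IsAcyclic := by
    intro v c hc
    by_cases hmem : s(v1, i) ∈ c.edges
    · exact hforall c hc hmem
    · have hce : ∀ e ∈ c.edges, e ∈ τ.edgeSet := by
        intro e he
        have := c.edges_subset_edgeSet he
        rw [hτ', SimpleGraph.edgeSet_fromEdgeSet] at this
        rcases this.1 with ⟨h1, _⟩ | h1
        · exact h1
        · exact absurd (h1 ▸ he) hmem
      exact hτ.IsAcyclic _ (hc.transfer hce)
  exact ⟨hconn', hacyc⟩
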